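/- Let P ⊆ ℝ^d be a finite nonempty set, 0 < ε < α, and let c be an α-centerpoint of P. Then c is ε-robustly representative of P: for every finite set P' with |P' ∩ P| > (1−ε)|P|, we have max_{y∈P'} dist(c,y) ≤ diam(P'). -/

import Mathlib

open scoped Classical

theorem stmt_8 {d : ℕ} (P : Finset (EuclideanSpace ℝ (Fin d))) (hP : P.Nonempty)
    (α ε : ℝ) (hε0 : 0 < ε) (hεα : ε < α)
    (c : EuclideanSpace ℝ (Fin d))
    (hcenter : ∀ (f : EuclideanSpace ℝ (Fin d) →L[ℝ] ℝ) (a : ℝ), f ≠ 0 →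
      a ≤ f c → (⌈α * P.card⌉ : ℤ) ≤ (P.filter (fun p => a ≤ f p)).card)
    (P' : Finset (EuclideanSpace ℝ (Fin d)))
    (hcard : ((P' ∩ P).card : ℝ) > (1 - ε) * P.card) :
    ∀ y ∈ P', dist c y ≤ Metric.diam (P' : Set (EuclideanSpace ℝ (Fin d))) := by
  intro y hy
  rcases eq_or_ne c y with h | h
  · rw [h, dist_self]; exact Metric.diam_nonneg
  set v := c - y with hv
  have hvne : v ≠ 0 := sub_ne_zero.mpr h
  set f : EuclideanSpace ℝ (Fin d) →L[ℝ] ℝ := innerSL ℝ v with hf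
  have hfne : f ≠ 0 := by
    intro h0
    have := congrFun (congrArg DFunLike.coe h0) v
    simp only [hf, innerSL_apply_apply, ContinuousLinearMap.zero_apply] at this
    exact hvne (inner_self_eq_zero.mp this)
  have hcount := hcenter f (f c) hfne le_rfl
  have hn : (0:ℝ) < P.card := by exact_mod_cast Finset.card_pos.mpr hP
  have h1 : (ε * P.card : ℝ) < ((P.filter (fun p => f c ≤ f p)).card : ℝ) := by
    have h2 : (α * P.card : ℝ) ≤ ((⌈α * P.card⌉ : ℤ) : ℝ) := Int.le_ceil _
    have h3 : ((⌈α * P.card⌉ : ℤ) : ℝ) ≤ ((P.filter (fun p => f c ≤ f p)).card : ℝ) := by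
      exact_mod_cast hcount
    nlinarith
  have h2 : ((P \ P').card : ℝ) < ε * P.card := by
    have hsum : (P \ P').card + (P ∩ P').card = P.card := Finset.card_sdiff_add_card_inter P P'
    have hcomm : (P ∩ P').card = (P' ∩ P).card := by rw [Finset.inter_comm]
    have : ((P \ P').card : ℝ) = (P.card : ℝ) - ((P' ∩ P).card : ℝ) := by
      rw [← hcomm]; push_cast [← hsum]; ring
    rw [this]; linarith
  have hex : ∃ p ∈ P.filter (fun p => f c ≤ f p), p ∈ P' := by
    by_contra hcon
    push_neg at hcon
    have hsub : P.filter (fun p => f c ≤ f p) ⊆ P \ P' := by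
      intro p hp
      exact Finset.mem_sdiff.mpr ⟨Finset.mem_of_mem_filter p hp, hcon p hp⟩
    have := Finset.card_le_card hsub
    have : ((P.filter (fun p => f c ≤ f p)).card : ℝ) ≤ ((P \ P').card : ℝ) := by
      exact_mod_cast this
    linarith
  obtain ⟨p, hpf, hp'⟩ := hex
  have hfp : f c ≤ f p := (Finset.mem_filter.mp hpf).2
  have hinner : (0:ℝ) ≤ inner ℝ v (p - c) := by
    have : inner ℝ v c ≤ (inner ℝ v p : ℝ) := hfp
    rw [inner_sub_right]; linarith
  have hkey : ‖v‖ ≤ ‖p - y‖ := by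
    have hdecomp : (inner ℝ v (p - y) : ℝ) = inner ℝ v (p - c) + ‖v‖ ^ 2 := by
      have : p - y = (p - c) + v := by rw [hv]; abel
      rw [this, inner_add_right, real_inner_self_eq_norm_sq]
    have hcs : (inner ℝ v (p - y) : ℝ) ≤ ‖v‖ * ‖p - y‖ := real_inner_le_norm v (p - y)
    have hvpos : (0:ℝ) < ‖v‖ := norm_pos_iff.mpr hvne
    nlinarith
  have hbd : Bornology.IsBounded (P' : Set (EuclideanSpace ℝ (Fin d))) :=
    P'.finite_toSet.isBounded
  calc dist c y = ‖v‖ := by rw [dist_eq_norm, hv]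
    _ ≤ ‖p - y‖ := hkey
    _ = dist p y := (dist_eq_norm p y).symm
    _ = dist y p := dist_comm p y
    _ ≤ Metric.diam (P' : Set (EuclideanSpace ℝ (Fin d))) :=
        Metric.dist_le_diam_of_mem hbd hy hp'
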